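/- Let n ≥ 3 be an integer. For every real polynomial f in the linear span of the products T_{k₁}(t₁)T_{k₂}(t₂)T_{k₃}(t₃) of Chebyshev polynomials of the first kind with k₁,k₂,k₃ ≥ 0 and k_ν + k_μ ≤ 2n−5 for all 1 ≤ ν < μ ≤ 3 — in particular, for every real polynomial f in three variables of total degree at most 2n−5 — one has (1/π³) · ∫_{[−1,1]³} f(t) · Π_{i=1}^3 √(1−t_i²) dt = (4/n³) · Σ_{k ∈ Ξ_n with 0 < k_i < n for i=1,2,3} sin²(k₁π/n) · sin²(k₂π/n) · sin²(k₃π/n) · f(cos(k₁π/n), cos(k₂π/n), cos(k₃π/n)). -/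

import Mathlib

open MeasureTheory Complex

attribute [local instance] Classical.propDecidable

/-- The exponential e_k(x) = exp(2 pi i (k1 x1 + k2 x2 + k3 x3)). -/
noncomputable def e3 (k : ℤ × ℤ × ℤ) (x : ℝ × ℝ × ℝ) : ℂ :=
  Complex.exp (2 * Real.pi * Complex.I *
    ((k.1 : ℂ) * x.1 + (k.2.1 : ℂ) * x.2.1 + (k.2.2 : ℂ) * x.2.2))

/-- The point k/(2n) in three-space. -/
noncomputable def pt3 (n : ℕ) (k : ℤ × ℤ × ℤ) : ℝ × ℝ × ℝ :=
  ((k.1 : ℝ) / (2 * n), (k.2.1 : ℝ) / (2 * n), (k.2.2 : ℝ) / (2 * n))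

/-- The cube of integer points with coordinates in [-m, m]. -/
noncomputable def box3 (m : ℕ) : Finset (ℤ × ℤ × ℤ) :=
  Finset.Icc (-(m : ℤ), -(m : ℤ), -(m : ℤ)) ((m : ℤ), (m : ℤ), (m : ℤ))

/-- Ξ_n = {k : 0 ≤ k_i ≤ n, k1 ≡ k2 ≡ k3 (mod 2)}. -/
noncomputable def Xi3 (n : ℕ) : Finset (ℤ × ℤ × ℤ) :=
  (Finset.Icc ((0 : ℤ), (0 : ℤ), (0 : ℤ)) ((n : ℤ), (n : ℤ), (n : ℤ))).filter
    fun k => k.1 % 2 = k.2.1 % 2 ∧ k.2.1 % 2 = k.2.2 % 2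

/-- Products of Chebyshev polynomials of the first kind with pairwise degree sums at most N. -/
def chebProducts (N : ℕ) : Set (ℝ × ℝ × ℝ → ℝ) :=
  { g | ∃ k : ℕ × ℕ × ℕ, k.1 + k.2.1 ≤ N ∧ k.1 + k.2.2 ≤ N ∧ k.2.1 + k.2.2 ≤ N ∧
      g = fun t => (Polynomial.Chebyshev.T ℝ (k.1 : ℤ)).eval t.1 *
        (Polynomial.Chebyshev.T ℝ (k.2.1 : ℤ)).eval t.2.1 *
        (Polynomial.Chebyshev.T ℝ (k.2.2 : ℤ)).eval t.2.2 }


noncomputable def wv (j : ℕ) : ℝ := if j = 0 then 1/2 else if j = 2 then -(1/4 : ℝ) else 0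

lemma integral_cos_int (m : ℤ) :
    ∫ x in (0:ℝ)..Real.pi, Real.cos (m * x) = if m = 0 then Real.pi else 0 := by
  rcases eq_or_ne m 0 with rfl | hm
  · simp
  · rw [if_neg hm]
    have hm' : (m:ℝ) ≠ 0 := by exact_mod_cast hm
    rw [intervalIntegral.integral_comp_mul_left (fun x => Real.cos x) hm', mul_zero,
      integral_cos, Real.sin_zero, sub_zero, Real.sin_int_mul_pi, smul_eq_mul, mul_zero]

lemma trig_id' (a x : ℝ) : Real.sin x ^ 2 * Real.cos a =
    (1/2) * Real.cos a - (1/4) * Real.cos (a + 2*x) - (1/4) * Real.cos (a - 2*x) := by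
  rw [Real.cos_add, Real.cos_sub, Real.cos_two_mul, Real.sin_two_mul]
  linear_combination (Real.cos a) * (Real.sin_sq_add_cos_sq x)

lemma integral_sin_sq_cos (j : ℕ) :
    ∫ x in (0:ℝ)..Real.pi, Real.sin x ^ 2 * Real.cos (j * x)
      = if j = 0 then Real.pi/2 else if j = 2 then -(Real.pi/4) else 0 := by
  have h1 : ∀ x : ℝ, Real.sin x ^ 2 * Real.cos (j * x)
      = (1/2) * Real.cos (((j:ℤ) : ℝ) * x) - (1/4) * Real.cos (((j:ℤ)+2 : ℤ) * x)
        - (1/4) * Real.cos (((j:ℤ)-2 : ℤ) * x) := by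
    intro x
    rw [show (((j:ℤ)+2 : ℤ):ℝ) * x = ((j:ℤ):ℝ) * x + 2*x by push_cast; ring,
      show (((j:ℤ)-2 : ℤ):ℝ) * x = ((j:ℤ):ℝ) * x - 2*x by push_cast; ring,
      show ((j:ℕ):ℝ) * x = ((j:ℤ):ℝ) * x by push_cast; ring]
    exact trig_id' _ _
  simp_rw [h1]
  have ic : ∀ m : ℤ, IntervalIntegrable (fun x => Real.cos ((m:ℝ) * x)) volume 0 Real.pi :=
    fun m => (Real.continuous_cos.comp (continuous_const.mul continuous_id)).intervalIntegrable _ _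
  rw [intervalIntegral.integral_sub (((ic j).const_mul _).sub ((ic ((j:ℤ)+2)).const_mul _))
      ((ic ((j:ℤ)-2)).const_mul _),
    intervalIntegral.integral_sub ((ic j).const_mul _) ((ic ((j:ℤ)+2)).const_mul _),
    intervalIntegral.integral_const_mul, intervalIntegral.integral_const_mul,
    intervalIntegral.integral_const_mul, integral_cos_int, integral_cos_int, integral_cos_int]
  by_cases hj0 : j = 0
  · subst hj0; norm_num; ring
  by_cases hj2 : j = 2
  · subst hj2; norm_num; ring
  have a1 : (j:ℤ) ≠ 0 := by omega
  have a2 : (j:ℤ) + 2 ≠ 0 := by omega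
  have a3 : (j:ℤ) - 2 ≠ 0 := by omega
  rw [if_neg a1, if_neg a2, if_neg a3, if_neg hj0, if_neg hj2]
  ring

lemma integral_T_sqrt (j : ℕ) :
    ∫ t in Set.Icc (-1:ℝ) 1, (Polynomial.Chebyshev.T ℝ (j:ℤ)).eval t * Real.sqrt (1 - t^2)
      = if j = 0 then Real.pi/2 else if j = 2 then -(Real.pi/4) else 0 := by
  have hcont : Continuous fun t : ℝ => (Polynomial.Chebyshev.T ℝ (j:ℤ)).eval t
      * Real.sqrt (1 - t^2) := by
    apply Continuous.mul
    · exact (Polynomial.Chebyshev.T ℝ (j:ℤ)).continuous_aeval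
    · exact Real.continuous_sqrt.comp (by continuity)
  have h1 : ∫ t in Set.Icc (-1:ℝ) 1, (Polynomial.Chebyshev.T ℝ (j:ℤ)).eval t
      * Real.sqrt (1 - t^2)
      = ∫ t in (-1:ℝ)..1, (Polynomial.Chebyshev.T ℝ (j:ℤ)).eval t * Real.sqrt (1 - t^2) := by
    rw [intervalIntegral.integral_of_le (by norm_num : (-1:ℝ) ≤ 1),
      MeasureTheory.integral_Icc_eq_integral_Ioc]
  have h2 := intervalIntegral.integral_comp_smul_deriv
    (a := Real.pi) (b := 0) (f := Real.cos) (f' := fun x => -Real.sin x)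
    (g := fun t => (Polynomial.Chebyshev.T ℝ (j:ℤ)).eval t * Real.sqrt (1 - t^2))
    (fun x _ => Real.hasDerivAt_cos x) ((Real.continuous_sin.neg).continuousOn) hcont
  rw [Real.cos_pi, Real.cos_zero] at h2
  rw [h1, ← h2, intervalIntegral.integral_symm 0 Real.pi]
  have h3 : ∀ x ∈ Set.uIcc (0:ℝ) Real.pi,
      (-Real.sin x) • ((fun t => (Polynomial.Chebyshev.T ℝ (j:ℤ)).eval t
        * Real.sqrt (1 - t^2)) ∘ Real.cos) x = -(Real.sin x ^ 2 * Real.cos (j * x)) := by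
    intro x hx
    rw [Set.uIcc_of_le Real.pi_nonneg] at hx
    have hsin : 0 ≤ Real.sin x := Real.sin_nonneg_of_nonneg_of_le_pi hx.1 hx.2
    have hsqrt : Real.sqrt (1 - Real.cos x ^ 2) = Real.sin x := by
      rw [show 1 - Real.cos x ^ 2 = Real.sin x ^ 2 by
        linear_combination -(Real.sin_sq_add_cos_sq x), Real.sqrt_sq hsin]
    simp only [Function.comp_apply, smul_eq_mul]
    rw [hsqrt, Polynomial.Chebyshev.T_real_cos]
    push_cast
    ring
  rw [intervalIntegral.integral_congr h3, intervalIntegral.integral_neg, neg_neg,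
    integral_sin_sq_cos]


lemma lhs_gen (j1 j2 j3 : ℕ) :
    (1 / Real.pi ^ 3) *
        ∫ t in Set.Icc ((-(1:ℝ), -(1:ℝ), -(1:ℝ))) (((1:ℝ), (1:ℝ), (1:ℝ))),
          ((Polynomial.Chebyshev.T ℝ (j1 : ℤ)).eval t.1 *
            (Polynomial.Chebyshev.T ℝ (j2 : ℤ)).eval t.2.1 *
            (Polynomial.Chebyshev.T ℝ (j3 : ℤ)).eval t.2.2) *
          (Real.sqrt (1 - t.1 ^ 2) * Real.sqrt (1 - t.2.1 ^ 2) * Real.sqrt (1 - t.2.2 ^ 2))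
      = wv j1 * wv j2 * wv j3 := by
  have hfun : (fun t : ℝ × ℝ × ℝ =>
      ((Polynomial.Chebyshev.T ℝ (j1 : ℤ)).eval t.1 *
        (Polynomial.Chebyshev.T ℝ (j2 : ℤ)).eval t.2.1 *
        (Polynomial.Chebyshev.T ℝ (j3 : ℤ)).eval t.2.2) *
      (Real.sqrt (1 - t.1 ^ 2) * Real.sqrt (1 - t.2.1 ^ 2) * Real.sqrt (1 - t.2.2 ^ 2)))
      = fun t : ℝ × ℝ × ℝ =>
        ((Polynomial.Chebyshev.T ℝ (j1 : ℤ)).eval t.1 * Real.sqrt (1 - t.1 ^ 2)) *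
        (((Polynomial.Chebyshev.T ℝ (j2 : ℤ)).eval t.2.1 * Real.sqrt (1 - t.2.1 ^ 2)) *
         ((Polynomial.Chebyshev.T ℝ (j3 : ℤ)).eval t.2.2 * Real.sqrt (1 - t.2.2 ^ 2))) := by
    funext t; ring
  rw [show Set.Icc ((-(1:ℝ), -(1:ℝ), -(1:ℝ))) (((1:ℝ), (1:ℝ), (1:ℝ)))
      = Set.Icc (-(1:ℝ)) 1 ×ˢ Set.Icc ((-(1:ℝ), -(1:ℝ))) ((1:ℝ), (1:ℝ)) from
      Set.Icc_prod_eq _ _]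
  rw [hfun, MeasureTheory.Measure.volume_eq_prod,
    MeasureTheory.setIntegral_prod_mul
      (f := fun x : ℝ => (Polynomial.Chebyshev.T ℝ (j1 : ℤ)).eval x * Real.sqrt (1 - x ^ 2))
      (g := fun y : ℝ × ℝ =>
        ((Polynomial.Chebyshev.T ℝ (j2 : ℤ)).eval y.1 * Real.sqrt (1 - y.1 ^ 2)) *
        ((Polynomial.Chebyshev.T ℝ (j3 : ℤ)).eval y.2 * Real.sqrt (1 - y.2 ^ 2)))]
  rw [show Set.Icc ((-(1:ℝ), -(1:ℝ))) (((1:ℝ), (1:ℝ)))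
      = Set.Icc (-(1:ℝ)) 1 ×ˢ Set.Icc (-(1:ℝ)) 1 from Set.Icc_prod_eq _ _]
  rw [MeasureTheory.Measure.volume_eq_prod,
    MeasureTheory.setIntegral_prod_mul
      (f := fun x : ℝ => (Polynomial.Chebyshev.T ℝ (j2 : ℤ)).eval x * Real.sqrt (1 - x ^ 2))
      (g := fun y : ℝ => (Polynomial.Chebyshev.T ℝ (j3 : ℤ)).eval y * Real.sqrt (1 - y ^ 2))]
  have e1 := integral_T_sqrt j1
  have e2 := integral_T_sqrt j2
  have e3 := integral_T_sqrt j3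
  have hpi : Real.pi ≠ 0 := Real.pi_ne_zero
  have hval : ∀ j : ℕ, (if j = 0 then Real.pi/2 else if j = 2 then -(Real.pi/4) else 0)
      = Real.pi * wv j := by
    intro j; unfold wv; split_ifs <;> ring
  rw [show (-(1:ℝ)) = (-1:ℝ) by norm_num] at *
  rw [e1, e2, e3, hval, hval, hval]
  field_simp


noncomputable def Dv (n : ℕ) (m : ℤ) : ℝ :=
  (if (2 * (n:ℤ)) ∣ m then (n:ℝ) else 0) - (if (2:ℤ) ∣ m then 1 else 0)

lemma zpow_exp (n : ℕ) (m : ℤ) (k : ℕ) (hn : 0 < n) :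
    Complex.exp ((m:ℂ) * Real.pi * Complex.I / n) ^ k
      = Complex.exp (((m * k * Real.pi / n : ℝ) : ℂ) * Complex.I) := by
  rw [← Complex.exp_nat_mul]
  congr 1
  have hn' : (n:ℂ) ≠ 0 := by exact_mod_cast Nat.cast_ne_zero.mpr hn.ne'
  push_cast
  field_simp

lemma cos_sum (n : ℕ) (hn : 0 < n) (m : ℤ) :
    ∑ k ∈ Finset.Ico 1 n, Real.cos (m * k * Real.pi / n) = Dv n m := by
  classical
  set z : ℂ := Complex.exp ((m:ℂ) * Real.pi * Complex.I / n) with hz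
  have hn' : (n:ℂ) ≠ 0 := by exact_mod_cast Nat.cast_ne_zero.mpr hn.ne'
  have hπ : (Real.pi : ℂ) ≠ 0 := by exact_mod_cast Real.pi_ne_zero
  have hre : ∀ k : ℕ, Real.cos (m * k * Real.pi / n) = (z ^ k).re := by
    intro k
    rw [hz, zpow_exp n m k hn, Complex.exp_ofReal_mul_I_re]
  have hsum : ∑ k ∈ Finset.Ico 1 n, Real.cos (m * k * Real.pi / n)
      = (∑ k ∈ Finset.Ico 1 n, z ^ k).re := by
    rw [Complex.re_sum]; exact Finset.sum_congr rfl fun k _ => hre k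
  have hz1 : z = 1 ↔ (2 * (n:ℤ)) ∣ m := by
    rw [hz, Complex.exp_eq_one_iff]
    constructor
    · rintro ⟨j, hj⟩
      refine ⟨j, ?_⟩
      field_simp at hj
      have : (m:ℂ) * (Real.pi * Complex.I) = (2 * n * j) * (Real.pi * Complex.I) := by
        linear_combination (Real.pi * Complex.I) * hj
      have h2 := mul_right_cancel₀ (mul_ne_zero hπ Complex.I_ne_zero) this
      exact_mod_cast h2
    · rintro ⟨j, rfl⟩
      refine ⟨j, ?_⟩
      field_simp
      push_cast
      ring
  have hzn : z ^ n = (-1) ^ m := by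
    rw [hz, ← Complex.exp_nat_mul, show (n:ℂ) * ((m:ℂ) * Real.pi * Complex.I / n)
      = m * (Real.pi * Complex.I) by field_simp, Complex.exp_int_mul,
      Complex.exp_pi_mul_I]
  by_cases hdvd : (2 * (n:ℤ)) ∣ m
  · have hz' : z = 1 := hz1.mpr hdvd
    have h2 : (2:ℤ) ∣ m := dvd_trans ⟨(n:ℤ), rfl⟩ hdvd
    rw [hsum, hz']
    simp only [one_pow, Finset.sum_const, Nat.card_Ico, nsmul_eq_mul, mul_one]
    rw [Dv, if_pos hdvd, if_pos h2]
    simp [Complex.natCast_re, Nat.cast_sub hn]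
  · have hzne : z ≠ 1 := fun h => hdvd (hz1.mp h)
    have hzne0 : z ≠ 0 := Complex.exp_ne_zero _
    have hz1' : z - 1 ≠ 0 := sub_ne_zero.mpr hzne
    have hgeom : ∑ k ∈ Finset.Ico 1 n, z ^ k = (z ^ n - 1) / (z - 1) - 1 := by
      have h0 : ∑ k ∈ Finset.range n, z ^ k = (z ^ n - 1) / (z - 1) := geom_sum_eq hzne n
      rw [Finset.range_eq_Ico, Finset.sum_eq_sum_Ico_succ_bot hn] at h0
      norm_num at h0
      linear_combination h0
    rcases Int.even_or_odd m with he | ho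
    · have hm1 : ((-1:ℂ)) ^ m = 1 := he.neg_one_zpow
      have h2 : (2:ℤ) ∣ m := he.two_dvd
      rw [hsum, hgeom, hzn, hm1]
      simp only [sub_self, zero_div, zero_sub]
      rw [Dv, if_neg hdvd, if_pos h2]
      simp
    · have hm1 : ((-1:ℂ)) ^ m = -1 := ho.neg_one_zpow
      have h2 : ¬ (2:ℤ) ∣ m := by
        rcases ho with ⟨t, rfl⟩; omega
      rw [hsum, hgeom, hzn, hm1]
      rw [Dv, if_neg hdvd, if_neg h2]
      have hconj : (starRingEnd ℂ) z = z⁻¹ := by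
        rw [hz, ← Complex.exp_conj, ← Complex.exp_neg]
        congr 1
        simp only [map_div₀, map_mul, Complex.conj_I, map_intCast, Complex.conj_ofReal,
          map_natCast]
        ring
      set w : ℂ := (-1 - 1) / (z - 1) - 1 with hw
      have hcw : (starRingEnd ℂ) w = (-1 - 1) / (z⁻¹ - 1) - 1 := by
        rw [hw]
        simp only [map_sub, map_div₀, map_one, map_neg, hconj]
      have h1z : (1:ℂ) - z ≠ 0 := sub_ne_zero.mpr (Ne.symm hzne)
      have hkey : w + (starRingEnd ℂ) w = 0 := by
        rw [hcw, hw]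
        have hzinv : z⁻¹ - 1 = -(z - 1) / z := by field_simp; ring
        rw [hzinv]
        field_simp
        ring
      have hre0 : w.re = 0 := by
        have h0 : ((2 * w.re : ℝ) : ℂ) = 0 := by rw [← Complex.add_conj, hkey]
        have h0' : 2 * w.re = 0 := by exact_mod_cast h0
        linarith
      simpa using hre0

lemma trig_id (a x : ℝ) : Real.sin x ^ 2 * Real.cos a =
    (1/2) * Real.cos a - (1/4) * Real.cos (a + 2*x) - (1/4) * Real.cos (a - 2*x) := by
  rw [Real.cos_add, Real.cos_sub, Real.cos_two_mul, Real.sin_two_mul]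
  linear_combination (Real.cos a) * (Real.sin_sq_add_cos_sq x)

lemma W_eval (n : ℕ) (hn : 0 < n) (j : ℤ) :
    ∑ k ∈ Finset.Ico 1 n, Real.sin (k * Real.pi / n) ^ 2 * Real.cos (j * k * Real.pi / n)
      = (1/2) * Dv n j - (1/4) * Dv n (j+2) - (1/4) * Dv n (j-2) := by
  rw [← cos_sum n hn j, ← cos_sum n hn (j+2), ← cos_sum n hn (j-2),
    Finset.mul_sum, Finset.mul_sum, Finset.mul_sum, ← Finset.sum_sub_distrib,
    ← Finset.sum_sub_distrib]
  refine Finset.sum_congr rfl fun k _ => ?_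
  have hn' : (n:ℝ) ≠ 0 := by exact_mod_cast hn.ne'
  rw [show ((j+2:ℤ):ℝ) * k * Real.pi / n = j * k * Real.pi / n + 2 * (k * Real.pi / n) by
      push_cast; field_simp,
    show ((j-2:ℤ):ℝ) * k * Real.pi / n = j * k * Real.pi / n - 2 * (k * Real.pi / n) by
      push_cast; field_simp]
  exact trig_id _ _

lemma dvd_2n_iff (n : ℕ) (hn : 0 < n) (m : ℤ) (hm : -(2*(n:ℤ)) < m ∧ m < 2*n) :
    (2 * (n:ℤ)) ∣ m ↔ m = 0 := by
  constructor
  · rintro ⟨c, rfl⟩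
    have hn' : (0:ℤ) < 2 * n := by positivity
    have : c = 0 := by nlinarith [hm.1, hm.2]
    simp [this]
  · rintro rfl; exact dvd_zero _

lemma W_val (n : ℕ) (hn : 3 ≤ n) (j : ℕ) (hj : j ≤ 2*n - 3) :
    ∑ k ∈ Finset.Ico 1 n, Real.sin (k * Real.pi / n) ^ 2 * Real.cos ((j:ℤ) * k * Real.pi / n)
      = if j = 0 then (n:ℝ)/2 else if j = 2 then -((n:ℝ)/4) else 0 := by
  have hn0 : 0 < n := by omega
  rw [W_eval n hn0 j]
  have h1 : (2 * (n:ℤ)) ∣ (j:ℤ) ↔ (j:ℤ) = 0 := dvd_2n_iff n hn0 _ (by omega)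
  have h2 : (2 * (n:ℤ)) ∣ ((j:ℤ)+2) ↔ ((j:ℤ)+2) = 0 := dvd_2n_iff n hn0 _ (by omega)
  have h3 : (2 * (n:ℤ)) ∣ ((j:ℤ)-2) ↔ ((j:ℤ)-2) = 0 := dvd_2n_iff n hn0 _ (by omega)
  simp only [Dv, h1, h2, h3]
  rcases Nat.eq_zero_or_pos j with rfl | hj0
  · norm_num; ring
  rcases eq_or_ne j 2 with rfl | hj2
  · norm_num; ring
  · have hja : ((j:ℤ)) ≠ 0 := by omega
    have hjb : ((j:ℤ)) + 2 ≠ 0 := by omega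
    have hjc : ((j:ℤ)) - 2 ≠ 0 := by omega
    rw [if_neg hja, if_neg hjb, if_neg hjc, if_neg (by omega : j ≠ 0), if_neg hj2]
    have : ((2:ℤ) ∣ (j:ℤ)) ↔ ((2:ℤ) ∣ (j:ℤ)+2) := by constructor <;> intro h <;> omega
    have h' : ((2:ℤ) ∣ (j:ℤ)) ↔ ((2:ℤ) ∣ (j:ℤ)-2) := by constructor <;> intro h <;> omega
    by_cases he : (2:ℤ) ∣ (j:ℤ)
    · rw [if_pos he, if_pos (this.mp he), if_pos (h'.mp he)]; ring
    · rw [if_neg he, if_neg (fun h => he (this.mpr h)), if_neg (fun h => he (h'.mpr h))]; ring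

lemma W_twist_zero (n : ℕ) (hn : 3 ≤ n) (j : ℕ) (hj : j + 3 ≤ n) :
    ∑ k ∈ Finset.Ico 1 n, Real.sin (k * Real.pi / n) ^ 2
        * Real.cos (((j:ℤ) + n) * k * Real.pi / n) = 0 := by
  have hn0 : 0 < n := by omega
  have hW := W_eval n hn0 ((j:ℤ) + n)
  push_cast at hW ⊢
  rw [hW]
  have h1 : ¬ (2 * (n:ℤ)) ∣ ((j:ℤ)+n) := by
    rw [dvd_2n_iff n hn0 _ (by omega)]; omega
  have h2 : ¬ (2 * (n:ℤ)) ∣ ((j:ℤ)+n+2) := by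
    rw [dvd_2n_iff n hn0 _ (by omega)]; omega
  have h3 : ¬ (2 * (n:ℤ)) ∣ ((j:ℤ)+n-2) := by
    rw [dvd_2n_iff n hn0 _ (by omega)]; omega
  simp only [Dv, if_neg h1, if_neg h2, if_neg h3]
  have e2 : ((2:ℤ) ∣ ((j:ℤ)+n)) ↔ ((2:ℤ) ∣ ((j:ℤ)+n+2)) := by constructor <;> intro h <;> omega
  have e3 : ((2:ℤ) ∣ ((j:ℤ)+n)) ↔ ((2:ℤ) ∣ ((j:ℤ)+n-2)) := by constructor <;> intro h <;> omega
  by_cases he : (2:ℤ) ∣ ((j:ℤ)+n)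
  · rw [if_pos he, if_pos (e2.mp he), if_pos (e3.mp he)]; ring
  · rw [if_neg he, if_neg (fun h => he (e2.mpr h)), if_neg (fun h => he (e3.mpr h))]; ring

noncomputable def Pf (n j : ℕ) (x : ℤ) : ℝ :=
  Real.sin (x * Real.pi / n) ^ 2 * Real.cos ((j:ℝ) * x * Real.pi / n)

lemma cos_int_pi (a : ℤ) : Real.cos (a * Real.pi) = if a % 2 = 0 then 1 else -1 := by
  rcases Int.even_or_odd a with ⟨t, rfl⟩ | ⟨t, rfl⟩
  · rw [if_pos (by omega)]
    rw [show ((t+t:ℤ):ℝ) * Real.pi = (t:ℤ) * (2*Real.pi) by push_cast; ring]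
    exact Real.cos_int_mul_two_pi t
  · rw [if_neg (by omega)]
    rw [show ((2*t+1:ℤ):ℝ) * Real.pi = (t:ℤ) * (2*Real.pi) + Real.pi by push_cast; ring,
      Real.cos_add_pi, Real.cos_int_mul_two_pi t]

lemma Pf_twist (n : ℕ) (hn : 0 < n) (j : ℕ) (x : ℤ) :
    Pf n (j+n) x = Real.cos (x * Real.pi) * Pf n j x := by
  have hn' : (n:ℝ) ≠ 0 := by exact_mod_cast hn.ne'
  unfold Pf
  rw [show ((j+n:ℕ):ℝ) * x * Real.pi / n = (j:ℝ) * x * Real.pi / n + x * Real.pi by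
    push_cast; field_simp]
  rw [Real.cos_add, Real.sin_int_mul_pi]
  ring

lemma key_expand (n : ℕ) (hn : 0 < n) (j1 j2 j3 : ℕ) (a b c : ℤ) :
    (if a % 2 = b % 2 ∧ b % 2 = c % 2 then Pf n j1 a * Pf n j2 b * Pf n j3 c else 0)
    = (1/4)*(Pf n j1 a * Pf n j2 b * Pf n j3 c
        + Pf n (j1+n) a * Pf n (j2+n) b * Pf n j3 c
        + Pf n j1 a * Pf n (j2+n) b * Pf n (j3+n) c
        + Pf n (j1+n) a * Pf n j2 b * Pf n (j3+n) c) := by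
  classical
  rw [Pf_twist n hn j1 a, Pf_twist n hn j2 b, Pf_twist n hn j3 c,
    cos_int_pi a, cos_int_pi b, cos_int_pi c]
  rcases Int.emod_two_eq a with ha | ha <;> rcases Int.emod_two_eq b with hb | hb <;>
    rcases Int.emod_two_eq c with hc | hc <;>
    simp only [ha, hb, hc] <;> norm_num <;> ring

lemma sum_triple_prod (A : Finset ℤ) (u v w : ℤ → ℝ) :
    ∑ k ∈ A ×ˢ A ×ˢ A, u k.1 * v k.2.1 * w k.2.2
      = (∑ x ∈ A, u x) * (∑ x ∈ A, v x) * (∑ x ∈ A, w x) := by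
  rw [Finset.sum_product]
  have h1 : ∀ a : ℤ, ∑ m ∈ A ×ˢ A, u a * v m.1 * w m.2
      = u a * ((∑ x ∈ A, v x) * (∑ x ∈ A, w x)) := by
    intro a
    rw [Finset.sum_product, Finset.sum_mul_sum, Finset.mul_sum]
    exact Finset.sum_congr rfl fun b _ => by
      rw [Finset.mul_sum]
      exact Finset.sum_congr rfl fun c _ => by ring
  rw [Finset.sum_congr rfl fun a _ => h1 a, ← Finset.sum_mul]
  ring

lemma Ico_int_eq_map (n : ℕ) : Finset.Ico (1:ℤ) (n:ℤ)
    = (Finset.Ico 1 n).map ⟨Nat.cast, Nat.cast_injective⟩ := by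
  ext x
  simp only [Finset.mem_Ico, Finset.mem_map, Function.Embedding.coeFn_mk]
  constructor
  · intro h; exact ⟨x.toNat, by omega, by omega⟩
  · rintro ⟨k, hk, rfl⟩; omega

lemma Wz_val (n : ℕ) (hn : 3 ≤ n) (j : ℕ) (hj : j ≤ 2*n-3) :
    ∑ x ∈ Finset.Ico (1:ℤ) (n:ℤ), Pf n j x
      = if j = 0 then (n:ℝ)/2 else if j = 2 then -((n:ℝ)/4) else 0 := by
  rw [Ico_int_eq_map, Finset.sum_map]
  have hW := W_val n hn j hj
  rw [← hW]
  refine Finset.sum_congr rfl fun k _ => ?_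
  unfold Pf
  simp only [Function.Embedding.coeFn_mk]
  push_cast
  ring_nf

lemma Wz_twist (n : ℕ) (hn : 3 ≤ n) (j : ℕ) (hj : j + 3 ≤ n) :
    ∑ x ∈ Finset.Ico (1:ℤ) (n:ℤ), Pf n (j+n) x = 0 := by
  rw [Ico_int_eq_map, Finset.sum_map]
  have hW := W_twist_zero n hn j hj
  rw [← hW]
  refine Finset.sum_congr rfl fun k _ => ?_
  unfold Pf
  simp only [Function.Embedding.coeFn_mk]
  push_cast
  ring_nf


lemma rhs_gen (n : ℕ) (hn : 3 ≤ n) (j1 j2 j3 : ℕ) (h12 : j1 + j2 ≤ 2*n-5)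
    (h13 : j1 + j3 ≤ 2*n-5) (h23 : j2 + j3 ≤ 2*n-5) :
    (4 / (n : ℝ) ^ 3) *
        ∑ k ∈ (Xi3 n).filter (fun k => 0 < k.1 ∧ k.1 < (n : ℤ) ∧
            0 < k.2.1 ∧ k.2.1 < (n : ℤ) ∧ 0 < k.2.2 ∧ k.2.2 < (n : ℤ)),
          Real.sin (k.1 * Real.pi / n) ^ 2 * Real.sin (k.2.1 * Real.pi / n) ^ 2 *
            Real.sin (k.2.2 * Real.pi / n) ^ 2 *
            ((Polynomial.Chebyshev.T ℝ (j1 : ℤ)).eval (Real.cos (k.1 * Real.pi / n)) *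
             (Polynomial.Chebyshev.T ℝ (j2 : ℤ)).eval (Real.cos (k.2.1 * Real.pi / n)) *
             (Polynomial.Chebyshev.T ℝ (j3 : ℤ)).eval (Real.cos (k.2.2 * Real.pi / n)))
      = wv j1 * wv j2 * wv j3 := by
  classical
  have hn0 : 0 < n := by omega
  have hnR : (n:ℝ) ≠ 0 := by exact_mod_cast hn0.ne'
  have hset : (Xi3 n).filter (fun k => 0 < k.1 ∧ k.1 < (n : ℤ) ∧
        0 < k.2.1 ∧ k.2.1 < (n : ℤ) ∧ 0 < k.2.2 ∧ k.2.2 < (n : ℤ))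
      = ((Finset.Ico (1:ℤ) (n:ℤ)) ×ˢ (Finset.Ico (1:ℤ) (n:ℤ)) ×ˢ (Finset.Ico (1:ℤ) (n:ℤ))).filter
          (fun k => k.1 % 2 = k.2.1 % 2 ∧ k.2.1 % 2 = k.2.2 % 2) := by
    ext ⟨a, b, c⟩
    simp only [Xi3, Finset.mem_filter, Finset.mem_Icc, Finset.mem_product, Finset.mem_Ico,
      Prod.mk_le_mk, Prod.le_def]
    constructor
    · rintro ⟨⟨⟨h1, h2⟩, hp1, hp2⟩, h3⟩
      refine ⟨⟨?_, ?_, ?_⟩, hp1, hp2⟩ <;> simp_all <;> omega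
    · rintro ⟨⟨h1, h2, h3⟩, hp1, hp2⟩
      refine ⟨⟨⟨?_, ?_⟩, hp1, hp2⟩, ?_⟩ <;> simp_all <;> omega
  rw [hset, Finset.sum_filter]
  have hterm : ∀ k ∈ (Finset.Ico (1:ℤ) (n:ℤ)) ×ˢ (Finset.Ico (1:ℤ) (n:ℤ)) ×ˢ (Finset.Ico (1:ℤ) (n:ℤ)),
      (if k.1 % 2 = k.2.1 % 2 ∧ k.2.1 % 2 = k.2.2 % 2 then
        Real.sin (k.1 * Real.pi / n) ^ 2 * Real.sin (k.2.1 * Real.pi / n) ^ 2 *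
          Real.sin (k.2.2 * Real.pi / n) ^ 2 *
          ((Polynomial.Chebyshev.T ℝ (j1 : ℤ)).eval (Real.cos (k.1 * Real.pi / n)) *
           (Polynomial.Chebyshev.T ℝ (j2 : ℤ)).eval (Real.cos (k.2.1 * Real.pi / n)) *
           (Polynomial.Chebyshev.T ℝ (j3 : ℤ)).eval (Real.cos (k.2.2 * Real.pi / n))) else 0)
      = (1/4)*(Pf n j1 k.1 * Pf n j2 k.2.1 * Pf n j3 k.2.2
          + Pf n (j1+n) k.1 * Pf n (j2+n) k.2.1 * Pf n j3 k.2.2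
          + Pf n j1 k.1 * Pf n (j2+n) k.2.1 * Pf n (j3+n) k.2.2
          + Pf n (j1+n) k.1 * Pf n j2 k.2.1 * Pf n (j3+n) k.2.2) := by
    intro k _
    rw [← key_expand n hn0 j1 j2 j3 k.1 k.2.1 k.2.2]
    refine if_congr Iff.rfl ?_ rfl
    simp only [Polynomial.Chebyshev.T_real_cos]
    unfold Pf
    push_cast
    ring
  rw [Finset.sum_congr rfl hterm, ← Finset.mul_sum, Finset.sum_add_distrib,
    Finset.sum_add_distrib, Finset.sum_add_distrib, sum_triple_prod, sum_triple_prod,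
    sum_triple_prod, sum_triple_prod]
  have hv1 := Wz_val n hn j1 (by omega)
  have hv2 := Wz_val n hn j2 (by omega)
  have hv3 := Wz_val n hn j3 (by omega)
  have hw1 : (if j1 = 0 then (n:ℝ)/2 else if j1 = 2 then -((n:ℝ)/4) else 0) = n * wv j1 := by
    unfold wv; split_ifs <;> ring
  have hw2 : (if j2 = 0 then (n:ℝ)/2 else if j2 = 2 then -((n:ℝ)/4) else 0) = n * wv j2 := by
    unfold wv; split_ifs <;> ring
  have hw3 : (if j3 = 0 then (n:ℝ)/2 else if j3 = 2 then -((n:ℝ)/4) else 0) = n * wv j3 := by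
    unfold wv; split_ifs <;> ring
  rw [hv1, hv2, hv3, hw1, hw2, hw3]
  have d12 : (∑ x ∈ Finset.Ico (1:ℤ) (n:ℤ), Pf n (j1+n) x) = 0
      ∨ (∑ x ∈ Finset.Ico (1:ℤ) (n:ℤ), Pf n (j2+n) x) = 0 := by
    rcases (by omega : j1 + 3 ≤ n ∨ j2 + 3 ≤ n) with h | h
    · exact Or.inl (Wz_twist n hn j1 h)
    · exact Or.inr (Wz_twist n hn j2 h)
  have d13 : (∑ x ∈ Finset.Ico (1:ℤ) (n:ℤ), Pf n (j1+n) x) = 0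
      ∨ (∑ x ∈ Finset.Ico (1:ℤ) (n:ℤ), Pf n (j3+n) x) = 0 := by
    rcases (by omega : j1 + 3 ≤ n ∨ j3 + 3 ≤ n) with h | h
    · exact Or.inl (Wz_twist n hn j1 h)
    · exact Or.inr (Wz_twist n hn j3 h)
  have d23 : (∑ x ∈ Finset.Ico (1:ℤ) (n:ℤ), Pf n (j2+n) x) = 0
      ∨ (∑ x ∈ Finset.Ico (1:ℤ) (n:ℤ), Pf n (j3+n) x) = 0 := by
    rcases (by omega : j2 + 3 ≤ n ∨ j3 + 3 ≤ n) with h | h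
    · exact Or.inl (Wz_twist n hn j2 h)
    · exact Or.inr (Wz_twist n hn j3 h)
  rcases d12 with h12' | h12' <;> rcases d13 with h13' | h13' <;> rcases d23 with h23' | h23' <;>
    simp only [h12', h13', h23', mul_zero, zero_mul, add_zero, zero_add] <;>
    field_simp <;> ring

set_option maxHeartbeats 1000000 in
theorem cubature_second_kind_3d (n : ℕ) (hn : 3 ≤ n)
    (f : ℝ × ℝ × ℝ → ℝ) (hf : f ∈ Submodule.span ℝ (chebProducts (2 * n - 5))) :
    (1 / Real.pi ^ 3) *
        ∫ t in Set.Icc ((-(1:ℝ), -(1:ℝ), -(1:ℝ))) (((1:ℝ), (1:ℝ), (1:ℝ))),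
          f t * (Real.sqrt (1 - t.1 ^ 2) * Real.sqrt (1 - t.2.1 ^ 2) *
            Real.sqrt (1 - t.2.2 ^ 2))
      = (4 / (n : ℝ) ^ 3) *
          ∑ k ∈ (Xi3 n).filter (fun k => 0 < k.1 ∧ k.1 < (n : ℤ) ∧
              0 < k.2.1 ∧ k.2.1 < (n : ℤ) ∧ 0 < k.2.2 ∧ k.2.2 < (n : ℤ)),
            Real.sin (k.1 * Real.pi / n) ^ 2 * Real.sin (k.2.1 * Real.pi / n) ^ 2 *
              Real.sin (k.2.2 * Real.pi / n) ^ 2 *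
              f (Real.cos (k.1 * Real.pi / n), Real.cos (k.2.1 * Real.pi / n),
                 Real.cos (k.2.2 * Real.pi / n)) := by
  classical
  have key : ∀ g : ℝ × ℝ × ℝ → ℝ, g ∈ Submodule.span ℝ (chebProducts (2 * n - 5)) →
      (MeasureTheory.IntegrableOn
        (fun t : ℝ × ℝ × ℝ => g t * (Real.sqrt (1 - t.1 ^ 2) * Real.sqrt (1 - t.2.1 ^ 2) *
          Real.sqrt (1 - t.2.2 ^ 2)))
        (Set.Icc ((-(1:ℝ), -(1:ℝ), -(1:ℝ))) (((1:ℝ), (1:ℝ), (1:ℝ)))) volume) ∧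
      ((1 / Real.pi ^ 3) *
        ∫ t in Set.Icc ((-(1:ℝ), -(1:ℝ), -(1:ℝ))) (((1:ℝ), (1:ℝ), (1:ℝ))),
          g t * (Real.sqrt (1 - t.1 ^ 2) * Real.sqrt (1 - t.2.1 ^ 2) *
            Real.sqrt (1 - t.2.2 ^ 2))
      = (4 / (n : ℝ) ^ 3) *
          ∑ k ∈ (Xi3 n).filter (fun k => 0 < k.1 ∧ k.1 < (n : ℤ) ∧
              0 < k.2.1 ∧ k.2.1 < (n : ℤ) ∧ 0 < k.2.2 ∧ k.2.2 < (n : ℤ)),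
            Real.sin (k.1 * Real.pi / n) ^ 2 * Real.sin (k.2.1 * Real.pi / n) ^ 2 *
              Real.sin (k.2.2 * Real.pi / n) ^ 2 *
              g (Real.cos (k.1 * Real.pi / n), Real.cos (k.2.1 * Real.pi / n),
                 Real.cos (k.2.2 * Real.pi / n))) := by
    intro g hg
    induction hg using Submodule.span_induction with
    | mem x hx =>
      obtain ⟨⟨j1, j2, j3⟩, h12, h13, h23, rfl⟩ := hx
      constructor
      · apply Continuous.integrableOn_Icc
        apply Continuous.mul
        · exact ((((Polynomial.Chebyshev.T ℝ (j1:ℤ)).continuous_aeval).comp continuous_fst).mul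
            ((((Polynomial.Chebyshev.T ℝ (j2:ℤ)).continuous_aeval).comp
              (continuous_fst.comp continuous_snd)))).mul
            (((Polynomial.Chebyshev.T ℝ (j3:ℤ)).continuous_aeval).comp
              (continuous_snd.comp continuous_snd))
        · have c1 : Continuous fun t : ℝ × ℝ × ℝ => 1 - t.1 ^ 2 :=
            continuous_const.sub (continuous_fst.pow 2)
          have c2 : Continuous fun t : ℝ × ℝ × ℝ => 1 - t.2.1 ^ 2 :=
            continuous_const.sub ((continuous_fst.comp continuous_snd).pow 2)
          have c3 : Continuous fun t : ℝ × ℝ × ℝ => 1 - t.2.2 ^ 2 :=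
            continuous_const.sub ((continuous_snd.comp continuous_snd).pow 2)
          exact ((Real.continuous_sqrt.comp c1).mul
            (Real.continuous_sqrt.comp c2)).mul (Real.continuous_sqrt.comp c3)
      · beta_reduce
        rw [lhs_gen j1 j2 j3, rhs_gen n hn j1 j2 j3 h12 h13 h23]
    | zero =>
      constructor
      · simp only [Pi.zero_apply, zero_mul]
        exact MeasureTheory.integrableOn_zero
      · simp
    | add x y hx hy ihx ihy =>
      obtain ⟨hxI, hxE⟩ := ihx
      obtain ⟨hyI, hyE⟩ := ihy
      constructor
      · have heq : (fun t : ℝ × ℝ × ℝ => (x + y) t * (Real.sqrt (1 - t.1 ^ 2) *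
            Real.sqrt (1 - t.2.1 ^ 2) * Real.sqrt (1 - t.2.2 ^ 2)))
            = (fun t : ℝ × ℝ × ℝ => x t * (Real.sqrt (1 - t.1 ^ 2) *
              Real.sqrt (1 - t.2.1 ^ 2) * Real.sqrt (1 - t.2.2 ^ 2))
              + y t * (Real.sqrt (1 - t.1 ^ 2) *
              Real.sqrt (1 - t.2.1 ^ 2) * Real.sqrt (1 - t.2.2 ^ 2))) := by
          funext t; simp [add_mul]
        rw [heq]
        exact hxI.add hyI
      · have hIeq : ∫ t in Set.Icc ((-(1:ℝ), -(1:ℝ), -(1:ℝ))) (((1:ℝ), (1:ℝ), (1:ℝ))),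
            (x + y) t * (Real.sqrt (1 - t.1 ^ 2) * Real.sqrt (1 - t.2.1 ^ 2) *
              Real.sqrt (1 - t.2.2 ^ 2))
            = (∫ t in Set.Icc ((-(1:ℝ), -(1:ℝ), -(1:ℝ))) (((1:ℝ), (1:ℝ), (1:ℝ))),
                x t * (Real.sqrt (1 - t.1 ^ 2) * Real.sqrt (1 - t.2.1 ^ 2) *
                  Real.sqrt (1 - t.2.2 ^ 2)))
              + ∫ t in Set.Icc ((-(1:ℝ), -(1:ℝ), -(1:ℝ))) (((1:ℝ), (1:ℝ), (1:ℝ))),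
                y t * (Real.sqrt (1 - t.1 ^ 2) * Real.sqrt (1 - t.2.1 ^ 2) *
                  Real.sqrt (1 - t.2.2 ^ 2)) := by
          simp_rw [Pi.add_apply, add_mul]
          exact MeasureTheory.integral_add hxI hyI
        have hSeq : ∀ s : Finset (ℤ × ℤ × ℤ),
            ∑ k ∈ s, Real.sin (k.1 * Real.pi / n) ^ 2 * Real.sin (k.2.1 * Real.pi / n) ^ 2 *
              Real.sin (k.2.2 * Real.pi / n) ^ 2 *
              (x + y) (Real.cos (k.1 * Real.pi / n), Real.cos (k.2.1 * Real.pi / n),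
                 Real.cos (k.2.2 * Real.pi / n))
            = (∑ k ∈ s, Real.sin (k.1 * Real.pi / n) ^ 2 * Real.sin (k.2.1 * Real.pi / n) ^ 2 *
              Real.sin (k.2.2 * Real.pi / n) ^ 2 *
              x (Real.cos (k.1 * Real.pi / n), Real.cos (k.2.1 * Real.pi / n),
                 Real.cos (k.2.2 * Real.pi / n)))
              + ∑ k ∈ s, Real.sin (k.1 * Real.pi / n) ^ 2 * Real.sin (k.2.1 * Real.pi / n) ^ 2 *
              Real.sin (k.2.2 * Real.pi / n) ^ 2 *
              y (Real.cos (k.1 * Real.pi / n), Real.cos (k.2.1 * Real.pi / n),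
                 Real.cos (k.2.2 * Real.pi / n)) := by
          intro s
          rw [← Finset.sum_add_distrib]
          exact Finset.sum_congr rfl fun k _ => by simp only [Pi.add_apply]; ring
        rw [hIeq, hSeq, mul_add, mul_add, hxE, hyE]
    | smul c x hx ihx =>
      obtain ⟨hxI, hxE⟩ := ihx
      constructor
      · have heq : (fun t : ℝ × ℝ × ℝ => (c • x) t * (Real.sqrt (1 - t.1 ^ 2) *
            Real.sqrt (1 - t.2.1 ^ 2) * Real.sqrt (1 - t.2.2 ^ 2)))
            = (fun t : ℝ × ℝ × ℝ => c * (x t * (Real.sqrt (1 - t.1 ^ 2) *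
              Real.sqrt (1 - t.2.1 ^ 2) * Real.sqrt (1 - t.2.2 ^ 2)))) := by
          funext t; simp [smul_eq_mul]; ring
        rw [heq]
        exact hxI.const_mul c
      · have hIeq : ∫ t in Set.Icc ((-(1:ℝ), -(1:ℝ), -(1:ℝ))) (((1:ℝ), (1:ℝ), (1:ℝ))),
            (c • x) t * (Real.sqrt (1 - t.1 ^ 2) * Real.sqrt (1 - t.2.1 ^ 2) *
              Real.sqrt (1 - t.2.2 ^ 2))
            = c * ∫ t in Set.Icc ((-(1:ℝ), -(1:ℝ), -(1:ℝ))) (((1:ℝ), (1:ℝ), (1:ℝ))),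
                x t * (Real.sqrt (1 - t.1 ^ 2) * Real.sqrt (1 - t.2.1 ^ 2) *
                  Real.sqrt (1 - t.2.2 ^ 2)) := by
          simp_rw [Pi.smul_apply, smul_eq_mul, mul_assoc]
          exact MeasureTheory.integral_const_mul c _
        have hSeq : ∀ s : Finset (ℤ × ℤ × ℤ),
            ∑ k ∈ s, Real.sin (k.1 * Real.pi / n) ^ 2 * Real.sin (k.2.1 * Real.pi / n) ^ 2 *
              Real.sin (k.2.2 * Real.pi / n) ^ 2 *
              (c • x) (Real.cos (k.1 * Real.pi / n), Real.cos (k.2.1 * Real.pi / n),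
                 Real.cos (k.2.2 * Real.pi / n))
            = c * ∑ k ∈ s, Real.sin (k.1 * Real.pi / n) ^ 2 * Real.sin (k.2.1 * Real.pi / n) ^ 2 *
              Real.sin (k.2.2 * Real.pi / n) ^ 2 *
              x (Real.cos (k.1 * Real.pi / n), Real.cos (k.2.1 * Real.pi / n),
                 Real.cos (k.2.2 * Real.pi / n)) := by
          intro s
          rw [Finset.mul_sum]
          exact Finset.sum_congr rfl fun k _ => by simp only [Pi.smul_apply, smul_eq_mul]; ring
        rw [hIeq, hSeq]
        linear_combination c * hxE
  exact (key f hf).2
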